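/- For any 2×2 complex (or real) matrix A with trace zero, the infimum over all invertible 2×2 matrices Ω of the operator norm of Ω A Ω⁻¹ equals the square root of the absolute value of det A. -/

import Mathlib

open Matrix

/-- Operator norm (on `ℓ²`) of a 2×2 complex matrix. -/
noncomputable def opNormC (A : Matrix (Fin 2) (Fin 2) ℂ) : ℝ :=
  ‖Matrix.toEuclideanCLM (𝕜 := ℂ) (n := Fin 2) A‖


lemma opNormC_nonneg (M : Matrix (Fin 2) (Fin 2) ℂ) : 0 ≤ opNormC M :=
  norm_nonneg _

lemma opNormC_add_le (M N : Matrix (Fin 2) (Fin 2) ℂ) :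
    opNormC (M + N) ≤ opNormC M + opNormC N := by
  unfold opNormC; rw [map_add]; exact norm_add_le _ _

lemma opNormC_le_bound (M : Matrix (Fin 2) (Fin 2) ℂ) {C : ℝ} (hC : 0 ≤ C)
    (h : ∀ x : Fin 2 → ℂ,
      Real.sqrt (‖M.mulVec x 0‖ ^ 2 + ‖M.mulVec x 1‖ ^ 2)
        ≤ C * Real.sqrt (‖x 0‖ ^ 2 + ‖x 1‖ ^ 2)) :
    opNormC M ≤ C := by
  apply ContinuousLinearMap.opNorm_le_bound _ hC
  intro y
  set x : Fin 2 → ℂ := WithLp.equiv 2 (Fin 2 → ℂ) y with hx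
  have hy : y = (WithLp.equiv 2 (Fin 2 → ℂ)).symm x := rfl
  rw [hy, WithLp.equiv_symm_apply, Matrix.toEuclideanCLM_toLp]
  rw [EuclideanSpace.norm_eq, EuclideanSpace.norm_eq]
  simpa [Fin.sum_univ_two, Matrix.toLin'_apply] using h x

lemma eigen_le_opNormC {M : Matrix (Fin 2) (Fin 2) ℂ} {a : ℂ} {v : Fin 2 → ℂ}
    (hv : v ≠ 0) (h : M.mulVec v = a • v) : ‖a‖ ≤ opNormC M := by
  set w : EuclideanSpace ℂ (Fin 2) := (WithLp.equiv 2 (Fin 2 → ℂ)).symm v with hw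
  have hw0 : w ≠ 0 := by
    simpa [hw] using hv
  have h1 : Matrix.toEuclideanCLM (𝕜 := ℂ) (n := Fin 2) M w = a • w := by
    rw [hw, WithLp.equiv_symm_apply, Matrix.toEuclideanCLM_toLp, h]
    rfl
  have h2 := (Matrix.toEuclideanCLM (𝕜 := ℂ) (n := Fin 2) M).le_opNorm w
  rw [h1, norm_smul] at h2
  have hwn : 0 < ‖w‖ := norm_pos_iff.2 hw0
  have := le_of_mul_le_mul_right (by simpa using h2) hwn
  exact this

lemma opNormC_diag_le (a : ℂ) : opNormC !![a, 0; 0, -a] ≤ ‖a‖ := by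
  apply opNormC_le_bound _ (norm_nonneg _)
  intro x
  have h0 : (!![a, 0; 0, -a]).mulVec x 0 = a * x 0 := by
    simp [Matrix.mulVec, dotProduct, Fin.sum_univ_two]
  have h1 : (!![a, 0; 0, -a]).mulVec x 1 = -a * x 1 := by
    simp [Matrix.mulVec, dotProduct, Fin.sum_univ_two]
  rw [h0, h1]
  have : ‖a * x 0‖ ^ 2 + ‖-a * x 1‖ ^ 2
      = ‖a‖ ^ 2 * (‖x 0‖ ^ 2 + ‖x 1‖ ^ 2) := by
    simp only [norm_mul, norm_neg]; ring
  rw [this, Real.sqrt_mul (sq_nonneg _), Real.sqrt_sq (norm_nonneg _)]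

lemma opNormC_nil_le (c : ℂ) : opNormC !![0, c; 0, 0] ≤ ‖c‖ := by
  apply opNormC_le_bound _ (norm_nonneg _)
  intro x
  have h0 : (!![0, c; 0, 0]).mulVec x 0 = c * x 1 := by
    simp [Matrix.mulVec, dotProduct, Fin.sum_univ_two]
  have h1 : (!![0, c; 0, 0]).mulVec x 1 = 0 := by
    simp [Matrix.mulVec, dotProduct, Fin.sum_univ_two]
  rw [h0, h1]
  simp only [norm_zero, norm_mul]
  calc Real.sqrt ((‖c‖ * ‖x 1‖) ^ 2 + 0 ^ 2)
      = ‖c‖ * Real.sqrt (‖x 1‖ ^ 2) := by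
        rw [mul_pow]
        rw [show (0:ℝ)^2 = 0 by norm_num, add_zero, Real.sqrt_mul (sq_nonneg _),
          Real.sqrt_sq (norm_nonneg _)]
    _ ≤ ‖c‖ * Real.sqrt (‖x 0‖ ^ 2 + ‖x 1‖ ^ 2) := by
        have := Real.sqrt_le_sqrt (show ‖x 1‖ ^ 2 ≤ ‖x 0‖ ^ 2 + ‖x 1‖ ^ 2 by nlinarith [sq_nonneg (‖x 0‖)])
        exact mul_le_mul_of_nonneg_left this (norm_nonneg _)

lemma opNormC_tri_le (a c : ℂ) :
    opNormC !![a, c; 0, -a] ≤ ‖a‖ + ‖c‖ := by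
  have h : !![a, c; 0, -a] = !![a, 0; 0, -a] + !![0, c; 0, 0] := by
    ext i j; fin_cases i <;> fin_cases j <;> simp
  rw [h]
  calc opNormC (!![a, 0; 0, -a] + !![0, c; 0, 0])
      ≤ opNormC !![a, 0; 0, -a] + opNormC !![0, c; 0, 0] := by
        unfold opNormC; rw [map_add]; exact norm_add_le _ _
    _ ≤ ‖a‖ + ‖c‖ := add_le_add (opNormC_diag_le a) (opNormC_nil_le c)

/-- For any 2×2 complex matrix `A` with trace zero, the infimum over invertible `Ω`
of `‖Ω A Ω⁻¹‖` equals `√|det A|`. -/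
theorem inf_conj_opNorm_eq_sqrt_abs_det (A : Matrix (Fin 2) (Fin 2) ℂ)
    (hA : A.trace = 0) :
    sInf {x : ℝ | ∃ Ω : Matrix (Fin 2) (Fin 2) ℂ, IsUnit Ω ∧ x = opNormC (Ω * A * Ω⁻¹)}
      = Real.sqrt (‖A.det‖) := by
  set S := {x : ℝ | ∃ Ω : Matrix (Fin 2) (Fin 2) ℂ, IsUnit Ω ∧ x = opNormC (Ω * A * Ω⁻¹)}
    with hS
  -- eigenvalue
  obtain ⟨a, ha⟩ := IsAlgClosed.exists_pow_nat_eq (-A.det) (n := 2) (by norm_num)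
  have htr : A 0 0 + A 1 1 = 0 := by rwa [Matrix.trace_fin_two] at hA
  have hsqrt : Real.sqrt (‖A.det‖) = ‖a‖ := by
    have hdet : A.det = -a ^ 2 := by linear_combination ha
    rw [hdet, norm_neg, norm_pow, Real.sqrt_sq (norm_nonneg _)]
  rw [hsqrt]
  -- eigenvector
  set N : Matrix (Fin 2) (Fin 2) ℂ := !![a - A 0 0, -A 0 1; -A 1 0, a - A 1 1] with hN
  have hdetN : N.det = 0 := by
    rw [hN, Matrix.det_fin_two_of]
    have hdet : A.det = A 0 0 * A 1 1 - A 0 1 * A 1 0 := Matrix.det_fin_two A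
    have h2 : a ^ 2 = -(A 0 0 * A 1 1 - A 0 1 * A 1 0) := by rw [← hdet]; exact ha
    linear_combination h2 - a * htr
  obtain ⟨v, hv, hNv⟩ := (Matrix.exists_mulVec_eq_zero_iff).2 hdetN
  have hAv : A.mulVec v = a • v := by
    funext i
    have h0 := congrFun hNv 0
    have h1 := congrFun hNv 1
    simp [hN, Matrix.mulVec, dotProduct, Fin.sum_univ_two] at h0 h1
    fin_cases i <;>
      simp [Matrix.mulVec, dotProduct, Fin.sum_univ_two] <;>
      [linear_combination -h0; linear_combination -h1]
  -- lower bound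
  have hlb : ∀ x ∈ S, ‖a‖ ≤ x := by
    rintro x ⟨Ω, hΩ, rfl⟩
    have hΩdet : IsUnit Ω.det := (Matrix.isUnit_iff_isUnit_det Ω).1 hΩ
    have hΩinvΩ : Ω⁻¹ * Ω = 1 := Matrix.nonsing_inv_mul Ω hΩdet
    set w : Fin 2 → ℂ := Ω.mulVec v with hw
    have hw0 : w ≠ 0 := by
      intro hcon
      apply hv
      have : Ω⁻¹.mulVec w = v := by
        rw [hw, Matrix.mulVec_mulVec, hΩinvΩ, Matrix.one_mulVec]
      rw [← this, hcon, Matrix.mulVec_zero]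
    have hMw : (Ω * A * Ω⁻¹).mulVec w = a • w := by
      rw [hw, Matrix.mulVec_mulVec, Matrix.mul_assoc, Matrix.mul_assoc, hΩinvΩ,
        Matrix.mul_one, ← Matrix.mulVec_mulVec, hAv, Matrix.mulVec_smul]
    exact eigen_le_opNormC hw0 hMw
  have hbdd : BddBelow S := ⟨‖a‖, fun x hx => hlb x hx⟩
  have hne : S.Nonempty := ⟨opNormC (1 * A * 1⁻¹), 1, isUnit_one, rfl⟩
  -- triangularization
  obtain ⟨P, hP, hPcol⟩ : ∃ P : Matrix (Fin 2) (Fin 2) ℂ,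
      IsUnit P ∧ P.mulVec ![1, 0] = v := by
    by_cases h0 : v 0 = 0
    · have h1 : v 1 ≠ 0 := by
        intro h1; apply hv; funext i; fin_cases i <;> simpa
      refine ⟨!![0, 1; v 1, 0], ?_, ?_⟩
      · rw [Matrix.isUnit_iff_isUnit_det, Matrix.det_fin_two_of, isUnit_iff_ne_zero]
        simpa using h1
      · funext i; fin_cases i <;>
          simp [Matrix.mulVec, dotProduct, Fin.sum_univ_two, h0]
    · refine ⟨!![v 0, 0; v 1, 1], ?_, ?_⟩
      · rw [Matrix.isUnit_iff_isUnit_det, Matrix.det_fin_two_of, isUnit_iff_ne_zero]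
        simpa using h0
      · funext i; fin_cases i <;>
          simp [Matrix.mulVec, dotProduct, Fin.sum_univ_two]
  have hPdet : IsUnit P.det := (Matrix.isUnit_iff_isUnit_det P).1 hP
  set B : Matrix (Fin 2) (Fin 2) ℂ := P⁻¹ * A * P with hBdef
  have hPinvP : P⁻¹ * P = 1 := Matrix.nonsing_inv_mul P hPdet
  have hPPinv : P * P⁻¹ = 1 := Matrix.mul_nonsing_inv P hPdet
  have hPinvv : P⁻¹.mulVec v = ![1, 0] := by
    rw [← hPcol, Matrix.mulVec_mulVec, hPinvP, Matrix.one_mulVec]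
  have hBe : B.mulVec ![1, 0] = a • ![1, 0] := by
    rw [hBdef, ← Matrix.mulVec_mulVec, ← Matrix.mulVec_mulVec, hPcol, hAv,
      Matrix.mulVec_smul, hPinvv]
  have hB00 : B 0 0 = a := by
    have := congrFun hBe 0
    simpa [Matrix.mulVec, dotProduct, Fin.sum_univ_two] using this
  have hB10 : B 1 0 = 0 := by
    have := congrFun hBe 1
    simpa [Matrix.mulVec, dotProduct, Fin.sum_univ_two] using this
  have hBtr : B.trace = 0 := by
    rw [hBdef, Matrix.trace_mul_cycle, hPPinv, Matrix.one_mul, hA]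
  have hB11 : B 1 1 = -a := by
    rw [Matrix.trace_fin_two] at hBtr
    linear_combination hBtr - hB00
  have hB : B = !![a, B 0 1; 0, -a] := by
    conv_lhs => rw [Matrix.eta_fin_two B]
    rw [hB00, hB10, hB11]
  -- conjugation by diag(t, 1)
  have hconj : ∀ t : ℂ, t ≠ 0 →
      ∃ Ω : Matrix (Fin 2) (Fin 2) ℂ, IsUnit Ω ∧
        Ω * A * Ω⁻¹ = !![a, t * B 0 1; 0, -a] := by
    intro t ht
    set D : Matrix (Fin 2) (Fin 2) ℂ := !![t, 0; 0, 1] with hD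
    have hDdet : IsUnit D.det := by
      rw [hD, Matrix.det_fin_two_of, isUnit_iff_ne_zero]; simpa using ht
    have hDinv : D⁻¹ = !![t⁻¹, 0; 0, 1] := by
      apply Matrix.inv_eq_right_inv
      rw [hD, Matrix.mul_fin_two, Matrix.one_fin_two]
      simp [mul_inv_cancel₀ ht]
    refine ⟨D * P⁻¹, ?_, ?_⟩
    · rw [Matrix.isUnit_iff_isUnit_det, Matrix.det_mul]
      exact hDdet.mul (Matrix.isUnit_nonsing_inv_det P hPdet)
    · rw [Matrix.mul_inv_rev, Matrix.nonsing_inv_nonsing_inv P hPdet]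
      have hstep : D * P⁻¹ * A * (P * D⁻¹) = D * B * D⁻¹ := by
        rw [hBdef]; simp only [Matrix.mul_assoc]
      rw [hstep, hB, hDinv, hD, Matrix.mul_fin_two, Matrix.mul_fin_two]
      congr 1 <;> field_simp <;> simp [ht]
  -- upper bound
  have hub : sInf S ≤ ‖a‖ := by
    apply le_of_forall_pos_le_add
    intro ε hε
    set c := B 0 1 with hc
    set tr : ℝ := ε / (‖c‖ + 1) with htr'
    have hcpos : (0:ℝ) < ‖c‖ + 1 :=
      lt_of_lt_of_le one_pos (by linarith [norm_nonneg c])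
    have htrpos : 0 < tr := div_pos hε hcpos
    have ht : (tr : ℂ) ≠ 0 := by
      simpa using ne_of_gt htrpos
    obtain ⟨Ω, hΩ, hΩeq⟩ := hconj (tr : ℂ) ht
    have hmem : opNormC (Ω * A * Ω⁻¹) ∈ S := ⟨Ω, hΩ, rfl⟩
    have hval : opNormC (Ω * A * Ω⁻¹) ≤ ‖a‖ + ε := by
      rw [hΩeq]
      refine le_trans (opNormC_tri_le a _) ?_
      have habs : ‖(tr : ℂ) * c‖ ≤ ε := by
        rw [norm_mul, Complex.norm_of_nonneg htrpos.le, htr']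
        rw [div_mul_eq_mul_div, div_le_iff₀ hcpos]
        nlinarith [norm_nonneg c]
      linarith
    exact le_trans (csInf_le hbdd hmem) hval
  exact le_antisymm hub (le_csInf hne hlb)
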